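/- Let r > k ≥ 2 be fixed. If F is a G_r(3r-2k,3)-free r-uniform hypergraph on n vertices with no (k-1)-subset of codegree one, then C(r,k)·|F| ≤ (2C(r,k)/(2C(r,k)-1))·C(n,k). Consequently f_r(n, 3r-2k, 3) ≤ (2C(r,k)/(2C(r,k)-1))·C(n,k)/C(r,k) + C(n,k-1), where f_r(n,v,e) is the maximum number of edges in a G_r(v,e)-free r-uniform hypergraph on n vertices. -/

import Mathlib

open Finset

/-- `sparseTuranNumber n r v e` is `f_r(n,v,e)`, the maximum number of edges in an
r-uniform hypergraph on n vertices in which the union of any e distinct edges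
contains at least v+1 vertices. -/
noncomputable def sparseTuranNumber (n r v e : ℕ) : ℕ :=
  sSup {m | ∃ H : Finset (Finset (Fin n)),
    (∀ A ∈ H, A.card = r) ∧
    (∀ S ⊆ H, S.card = e → v + 1 ≤ (S.sup id).card) ∧
    H.card = m}

lemma aux_union_bound {n r k : ℕ} (A B C S T : Finset (Fin n)) (hkr : k ≤ r)
    (hA : A.card = r) (hB : B.card = r) (hC : C.card = r)
    (hS : S.card = k) (hT : T.card = k)
    (hSA : S ⊆ A) (hSB : S ⊆ B) (hTA : T ⊆ A) (hTC : T ⊆ C) :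
    (A ∪ B ∪ C).card ≤ 3 * r - 2 * k := by
  have hsub : A ∪ B ∪ C ⊆ A ∪ (B \ S) ∪ (C \ T) := by
    intro x hx
    simp only [mem_union, mem_sdiff] at hx ⊢
    rcases hx with (hx | hx) | hx
    · tauto
    · by_cases hxS : x ∈ S
      · exact Or.inl (Or.inl (hSA hxS))
      · tauto
    · by_cases hxT : x ∈ T
      · exact Or.inl (Or.inl (hTA hxT))
      · tauto
  have h1 : (B \ S).card = r - k := by rw [card_sdiff_of_subset hSB, hB, hS]
  have h2 : (C \ T).card = r - k := by rw [card_sdiff_of_subset hTC, hC, hT]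
  have h3 : (A ∪ B ∪ C).card ≤ (A ∪ (B \ S) ∪ (C \ T)).card := card_le_card hsub
  have h4 : (A ∪ (B \ S) ∪ (C \ T)).card ≤ (A ∪ (B \ S)).card + (C \ T).card :=
    card_union_le _ _
  have h5 : (A ∪ (B \ S)).card ≤ A.card + (B \ S).card := card_union_le _ _
  omega

/-- Main nat-valued counting inequality. -/
lemma part1_nat (n r k : ℕ) (hk : 2 ≤ k) (hrk : k < r)
    (F : Finset (Finset (Fin n))) (hunif : ∀ A ∈ F, A.card = r)
    (htriple : ∀ A ∈ F, ∀ B ∈ F, ∀ C ∈ F, A ≠ B → A ≠ C → B ≠ C →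
        3 * r - 2 * k + 1 ≤ (A ∪ B ∪ C).card)
    (hcodeg : ∀ T : Finset (Fin n), T.card = k - 1 →
        (F.filter (fun A => T ⊆ A)).card ≠ 1) :
    2 * (r.choose k * F.card) ≤ 2 * n.choose k + F.card := by
  have hkr : k ≤ r := le_of_lt hrk
  set P : Finset (Finset (Fin n)) := univ.powersetCard k with hPdef
  set d : Finset (Fin n) → ℕ := fun S => (F.filter (fun A => S ⊆ A)).card with hddef
  -- helper: a (k-1)-subset of A containing a given vertex
  have helperT : ∀ A ∈ F, ∀ x ∈ A, ∃ T, T ⊆ A ∧ x ∈ T ∧ T.card = k - 1 := by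
    intro A hA x hxA
    obtain ⟨t, hts, htc⟩ := Finset.exists_subset_card_eq (s := A.erase x) (n := k - 2)
      (by rw [card_erase_of_mem hxA, hunif A hA]; omega)
    refine ⟨insert x t, ?_, mem_insert_self _ _, ?_⟩
    · exact insert_subset hxA (hts.trans (erase_subset _ _))
    · rw [card_insert_of_notMem (fun h => (mem_erase.1 (hts h)).1 rfl), htc]
      omega
  -- any two distinct edges intersect in at most k vertices
  have hpair : ∀ A ∈ F, ∀ B ∈ F, A ≠ B → (A ∩ B).card ≤ k := by
    intro A hA B hB hAB
    by_contra hlt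
    push_neg at hlt
    have hnsub : ¬ A ⊆ B := fun hs =>
      hAB (eq_of_subset_of_card_le hs (by rw [hunif A hA, hunif B hB]))
    obtain ⟨x, hxA, hxB⟩ := not_subset.1 hnsub
    obtain ⟨T, hTA, hxT, hTc⟩ := helperT A hA x hxA
    have hfil : F.filter (fun A' => T ⊆ A') = {A} := by
      apply Finset.Subset.antisymm
      · intro E hE
        rw [mem_filter] at hE
        obtain ⟨hEF, hTE⟩ := hE
        rw [mem_singleton]
        by_contra hne
        have hEB : E ≠ B := fun h => hxB (h ▸ hTE hxT)
        have ht3 := htriple A hA B hB E hEF hAB (Ne.symm hne) (Ne.symm hEB)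
        have e1 := Finset.card_union_add_card_inter (A ∪ B) E
        have e2 := Finset.card_union_add_card_inter A B
        have hTsub : T ⊆ (A ∪ B) ∩ E :=
          subset_inter (hTA.trans subset_union_left) hTE
        have hle := card_le_card hTsub
        have hEc := hunif E hEF
        have hAc := hunif A hA
        have hBc := hunif B hB
        omega
      · rw [singleton_subset_iff, mem_filter]
        exact ⟨hA, hTA⟩
    exact hcodeg T hTc (by rw [hfil, card_singleton])
  -- each k-set has degree at most 2
  have hdeg2 : ∀ S : Finset (Fin n), S.card = k → d S ≤ 2 := by
    intro S hS
    by_contra hlt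
    push_neg at hlt
    obtain ⟨t, hts, htc⟩ := Finset.exists_subset_card_eq (n := 3) hlt
    obtain ⟨a, b, c, hab, hac, hbc, ht⟩ := Finset.card_eq_three.1 htc
    have ha := hts (ht ▸ mem_insert_self a {b, c})
    have hb := hts (ht ▸ mem_insert_of_mem (mem_insert_self b {c}))
    have hc := hts (ht ▸ mem_insert_of_mem (mem_insert_of_mem (mem_singleton_self c)))
    rw [mem_filter] at ha hb hc
    have h3 := htriple a ha.1 b hb.1 c hc.1 hab hac hbc
    have hub := aux_union_bound a b c S S hkr (hunif a ha.1) (hunif b hb.1)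
      (hunif c hc.1) hS hS ha.2 hb.2 ha.2 hc.2
    omega
  set D : Finset (Finset (Fin n)) := P.filter (fun S => 2 ≤ d S) with hDdef
  -- each edge contains at most one k-subset of degree ≥ 2
  have huniq : ∀ A ∈ F, (D.filter (fun S => S ⊆ A)).card ≤ 1 := by
    intro A hA
    rw [Finset.card_le_one]
    intro S hSm T hTm
    rw [mem_filter, hDdef, mem_filter, hPdef, mem_powersetCard] at hSm hTm
    obtain ⟨⟨⟨-, hSk⟩, hdS⟩, hSA⟩ := hSm
    obtain ⟨⟨⟨-, hTk⟩, hdT⟩, hTA⟩ := hTm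
    by_contra hne
    have hAinS : A ∈ F.filter (fun A' => S ⊆ A') := mem_filter.2 ⟨hA, hSA⟩
    have hAinT : A ∈ F.filter (fun A' => T ⊆ A') := mem_filter.2 ⟨hA, hTA⟩
    obtain ⟨B, hBm, hBA⟩ := Finset.exists_mem_ne (by omega : 1 < d S) A
    obtain ⟨C, hCm, hCA⟩ := Finset.exists_mem_ne (by omega : 1 < d T) A
    rw [mem_filter] at hBm hCm
    obtain ⟨hBF, hSB⟩ := hBm
    obtain ⟨hCF, hTC⟩ := hCm
    by_cases hBC : B = C
    · subst hBC
      have hsub : S ∪ T ⊆ A ∩ B :=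
        union_subset (subset_inter hSA hSB) (subset_inter hTA hTC)
      have hST : k + 1 ≤ (S ∪ T).card := by
        by_contra hle
        push_neg at hle
        have hcard : (S ∪ T).card ≤ S.card := by omega
        have heq : S = S ∪ T := eq_of_subset_of_card_le subset_union_left hcard
        have hTS : T ⊆ S := by rw [heq]; exact subset_union_right
        exact hne (eq_of_subset_of_card_le hTS (by omega)).symm
      have := card_le_card hsub
      have := hpair A hA B hBF (Ne.symm hBA)
      omega
    · have h3 := htriple A hA B hBF C hCF (Ne.symm hBA) (Ne.symm hCA) hBC
      have hub := aux_union_bound A B C S T hkr (hunif A hA) (hunif B hBF)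
        (hunif C hCF) hSk hTk hSA hSB hTA hTC
      omega
  -- double counting
  have hcount : ∀ (Q : Finset (Finset (Fin n))),
      ∑ S ∈ Q, (F.filter (fun A => S ⊆ A)).card
        = ∑ A ∈ F, (Q.filter (fun S => S ⊆ A)).card := by
    intro Q
    simp only [Finset.card_filter]
    exact Finset.sum_comm
  have hfilP : ∀ A ∈ F, P.filter (fun S => S ⊆ A) = A.powersetCard k := by
    intro A hA
    ext S
    simp only [mem_filter, hPdef, mem_powersetCard, subset_univ, true_and]
    tauto
  have hsum1 : ∑ S ∈ P, d S = r.choose k * F.card := by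
    rw [hddef]
    simp only
    rw [hcount P]
    rw [Finset.sum_congr rfl (fun A hA => by
      rw [hfilP A hA, Finset.card_powersetCard, hunif A hA])]
    rw [Finset.sum_const, smul_eq_mul, mul_comm]
  have hsum2 : ∑ S ∈ P, d S ≤ P.card + D.card := by
    calc ∑ S ∈ P, d S ≤ ∑ S ∈ P, (1 + if 2 ≤ d S then 1 else 0) := by
          apply Finset.sum_le_sum
          intro S hS
          have hSk : S.card = k := (mem_powersetCard.1 hS).2
          have := hdeg2 S hSk
          split_ifs <;> omega
      _ = P.card + D.card := by
          rw [Finset.sum_add_distrib, Finset.sum_const, smul_eq_mul, mul_one,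
            hDdef, Finset.card_filter]
  have hDF : 2 * D.card ≤ F.card := by
    have h1 : 2 * D.card ≤ ∑ S ∈ D, d S := by
      rw [two_mul]
      calc D.card + D.card = ∑ S ∈ D, 2 := by rw [Finset.sum_const, smul_eq_mul]; ring
        _ ≤ ∑ S ∈ D, d S := Finset.sum_le_sum (fun S hS => (mem_filter.1 hS).2)
    have h2 : ∑ S ∈ D, d S = ∑ A ∈ F, (D.filter (fun S => S ⊆ A)).card := hcount D
    have h3 : ∑ A ∈ F, (D.filter (fun S => S ⊆ A)).card ≤ ∑ A ∈ F, 1 :=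
      Finset.sum_le_sum huniq
    rw [Finset.sum_const, smul_eq_mul, mul_one] at h3
    omega
  have hP : P.card = n.choose k := by
    rw [hPdef, Finset.card_powersetCard, card_univ, Fintype.card_fin]
  omega

/-- Real-valued form of the main inequality. -/
lemma part1_real (n r k : ℕ) (hk : 2 ≤ k) (hrk : k < r)
    (F : Finset (Finset (Fin n))) (hunif : ∀ A ∈ F, A.card = r)
    (htriple : ∀ A ∈ F, ∀ B ∈ F, ∀ C ∈ F, A ≠ B → A ≠ C → B ≠ C →
        3 * r - 2 * k + 1 ≤ (A ∪ B ∪ C).card)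
    (hcodeg : ∀ T : Finset (Fin n), T.card = k - 1 →
        (F.filter (fun A => T ⊆ A)).card ≠ 1) :
    (r.choose k : ℝ) * F.card ≤
      (2 * r.choose k) / (2 * r.choose k - 1) * n.choose k := by
  have hnat := part1_nat n r k hk hrk F hunif htriple hcodeg
  have hC1 : (1 : ℝ) ≤ r.choose k := by
    exact_mod_cast Nat.one_le_iff_ne_zero.2 (Nat.choose_pos (le_of_lt hrk)).ne'
  have hcast : 2 * ((r.choose k : ℝ) * F.card) ≤ 2 * n.choose k + F.card := by
    exact_mod_cast hnat
  have h2C : (0 : ℝ) < 2 * r.choose k - 1 := by linarith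
  rw [div_mul_eq_mul_div, le_div_iff₀ h2C]
  have hprod := mul_le_mul_of_nonneg_left hcast (by linarith : (0:ℝ) ≤ (r.choose k : ℝ))
  nlinarith [hprod]

/-- The deletion argument. -/
lemma part2_aux (n r k : ℕ) (hk : 2 ≤ k) (hrk : k < r) :
    ∀ m : ℕ, ∀ H : Finset (Finset (Fin n)), H.card = m →
    (∀ A ∈ H, A.card = r) →
    (∀ A ∈ H, ∀ B ∈ H, ∀ C ∈ H, A ≠ B → A ≠ C → B ≠ C →
        3 * r - 2 * k + 1 ≤ (A ∪ B ∪ C).card) →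
    (H.card : ℝ) ≤ (2 * r.choose k) / (2 * r.choose k - 1) * (n.choose k) / (r.choose k)
      + ((univ.powersetCard (k-1)).filter
          (fun T => (H.filter (fun A => T ⊆ A)).Nonempty)).card := by
  intro m
  induction m using Nat.strong_induction_on with
  | _ m ih =>
    intro H hm hunif htriple
    have hC1 : (1 : ℝ) ≤ r.choose k := by
      exact_mod_cast Nat.one_le_iff_ne_zero.2 (Nat.choose_pos (le_of_lt hrk)).ne'
    by_cases hgood : ∀ T : Finset (Fin n), T.card = k - 1 →
        (H.filter (fun A => T ⊆ A)).card ≠ 1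
    · have h1 := part1_real n r k hk hrk H hunif htriple hgood
      have h2 : (H.card : ℝ) ≤
          (2 * r.choose k) / (2 * r.choose k - 1) * (n.choose k) / (r.choose k) := by
        rw [le_div_iff₀ (by linarith : (0:ℝ) < (r.choose k : ℝ))]
        linarith [h1]
      have h3 : (0 : ℝ) ≤ (((univ.powersetCard (k-1)).filter
          (fun T => (H.filter (fun A => T ⊆ A)).Nonempty)).card : ℝ) := Nat.cast_nonneg _
      linarith
    · push_neg at hgood
      obtain ⟨T, hTc, hT1⟩ := hgood
      obtain ⟨A, hAeq⟩ := Finset.card_eq_one.1 hT1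
      have hAmem : A ∈ H.filter (fun A' => T ⊆ A') := hAeq ▸ mem_singleton_self A
      rw [mem_filter] at hAmem
      obtain ⟨hAH, hTA⟩ := hAmem
      have hm1 : 1 ≤ m := by rw [← hm]; exact card_pos.2 ⟨A, hAH⟩
      set H' := H.erase A with hH'def
      have hcard' : H'.card = m - 1 := by rw [hH'def, card_erase_of_mem hAH, hm]
      have hsubH : H' ⊆ H := erase_subset _ _
      have ihH := ih (m - 1) (by omega) H' hcard'
        (fun B hB => hunif B (hsubH hB))
        (fun B hB C hC E hE h1 h2 h3 =>
          htriple B (hsubH hB) C (hsubH hC) E (hsubH hE) h1 h2 h3)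
      -- bad sets comparison
      have hsub : (univ.powersetCard (k-1)).filter
            (fun T' => (H'.filter (fun A' => T' ⊆ A')).Nonempty) ⊆
          (univ.powersetCard (k-1)).filter
            (fun T' => (H.filter (fun A' => T' ⊆ A')).Nonempty) := by
        intro T' hT'
        rw [mem_filter] at hT' ⊢
        exact ⟨hT'.1, hT'.2.mono (Finset.filter_subset_filter _ hsubH)⟩
      have hTin : T ∈ (univ.powersetCard (k-1)).filter
          (fun T' => (H.filter (fun A' => T' ⊆ A')).Nonempty) := by
        rw [mem_filter, mem_powersetCard]
        exact ⟨⟨subset_univ _, hTc⟩, ⟨A, hAeq ▸ mem_singleton_self A⟩⟩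
      have hTout : T ∉ (univ.powersetCard (k-1)).filter
          (fun T' => (H'.filter (fun A' => T' ⊆ A')).Nonempty) := by
        rw [mem_filter]
        rintro ⟨-, hne⟩
        have : H'.filter (fun A' => T ⊆ A') = (H.filter (fun A' => T ⊆ A')).erase A := by
          rw [hH'def, Finset.filter_erase]
        rw [this, hAeq] at hne
        simp at hne
      have hlt : ((univ.powersetCard (k-1)).filter
            (fun T' => (H'.filter (fun A' => T' ⊆ A')).Nonempty)).card <
          ((univ.powersetCard (k-1)).filter
            (fun T' => (H.filter (fun A' => T' ⊆ A')).Nonempty)).card :=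
        Finset.card_lt_card ⟨hsub, fun h => hTout (h hTin)⟩
      have hHcard : (H.card : ℝ) = (H'.card : ℝ) + 1 := by
        rw [hcard', hm]
        push_cast [Nat.cast_sub hm1]
        ring
      rw [hHcard]
      have : (((univ.powersetCard (k-1)).filter
            (fun T' => (H'.filter (fun A' => T' ⊆ A')).Nonempty)).card : ℝ) + 1 ≤
          (((univ.powersetCard (k-1)).filter
            (fun T' => (H.filter (fun A' => T' ⊆ A')).Nonempty)).card : ℝ) := by
        exact_mod_cast hlt
      linarith

theorem upper_bound_counting (n r k : ℕ) (hk : 2 ≤ k) (hrk : k < r) :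
    (∀ F : Finset (Finset (Fin n)), (∀ A ∈ F, A.card = r) →
      (∀ A ∈ F, ∀ B ∈ F, ∀ C ∈ F, A ≠ B → A ≠ C → B ≠ C →
        3 * r - 2 * k + 1 ≤ (A ∪ B ∪ C).card) →
      (∀ T : Finset (Fin n), T.card = k - 1 →
        (F.filter (fun A => T ⊆ A)).card ≠ 1) →
      (r.choose k : ℝ) * F.card ≤
        (2 * r.choose k) / (2 * r.choose k - 1) * n.choose k) ∧
    (sparseTuranNumber n r (3 * r - 2 * k) 3 : ℝ) ≤
      (2 * r.choose k) / (2 * r.choose k - 1) * (n.choose k) / (r.choose k)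
        + n.choose (k - 1) := by
  constructor
  · exact fun F h1 h2 h3 => part1_real n r k hk hrk F h1 h2 h3
  · -- sSup handling
    have h0 : (0 : ℕ) ∈ {m | ∃ H : Finset (Finset (Fin n)),
        (∀ A ∈ H, A.card = r) ∧
        (∀ S ⊆ H, S.card = 3 → (3 * r - 2 * k) + 1 ≤ (S.sup id).card) ∧
        H.card = m} := by
      refine ⟨∅, fun A hA => absurd hA (notMem_empty A), fun S hS h3 => ?_, card_empty⟩
      rw [Finset.subset_empty.1 hS] at h3
      simp at h3
    have hbdd : BddAbove {m | ∃ H : Finset (Finset (Fin n)),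
        (∀ A ∈ H, A.card = r) ∧
        (∀ S ⊆ H, S.card = 3 → (3 * r - 2 * k) + 1 ≤ (S.sup id).card) ∧
        H.card = m} := by
      refine ⟨2 ^ n, ?_⟩
      rintro m ⟨H, -, -, hHm⟩
      rw [← hHm]
      calc H.card ≤ Fintype.card (Finset (Fin n)) := Finset.card_le_univ H
        _ = 2 ^ n := by simp
    have hmem := Nat.sSup_mem ⟨0, h0⟩ hbdd
    obtain ⟨H, hunif, htrip, hHcard⟩ := hmem
    rw [sparseTuranNumber, ← hHcard]
    have htriple : ∀ A ∈ H, ∀ B ∈ H, ∀ C ∈ H, A ≠ B → A ≠ C → B ≠ C →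
        3 * r - 2 * k + 1 ≤ (A ∪ B ∪ C).card := by
      intro A hA B hB C hC hAB hAC hBC
      have hsub : ({A, B, C} : Finset (Finset (Fin n))) ⊆ H := by
        intro X hX
        simp only [mem_insert, mem_singleton] at hX
        rcases hX with rfl | rfl | rfl <;> assumption
      have hcard3 : ({A, B, C} : Finset (Finset (Fin n))).card = 3 := by
        rw [card_insert_of_notMem (by simp [hAB, hAC]),
          card_insert_of_notMem (by simp [hBC]), card_singleton]
      have := htrip {A, B, C} hsub hcard3
      simpa [Finset.sup_insert, Finset.sup_singleton, Finset.union_assoc] using this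
    have hmain := part2_aux n r k hk hrk H.card H rfl hunif htriple
    have hbadle : (((univ.powersetCard (k-1)).filter
        (fun T => (H.filter (fun A => T ⊆ A)).Nonempty)).card : ℝ) ≤ n.choose (k-1) := by
      have : ((univ.powersetCard (k-1)).filter
          (fun T => (H.filter (fun A => T ⊆ A)).Nonempty)).card ≤
          (univ.powersetCard (k-1) : Finset (Finset (Fin n))).card :=
        card_le_card (filter_subset _ _)
      rw [Finset.card_powersetCard, card_univ, Fintype.card_fin] at this
      exact_mod_cast this
    linarith
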